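/- Let (X,d) be a semi-metric space with right-continuous comparison functions φ₁,…,φₙ and maps f₁,…,fₙ where each fᵢ is a φᵢ-contraction. Set φ := max φᵢ. Then for all non-empty bounded sets A, B ⊆ X (assuming X normal and regular), d_HP(∪ᵢ fᵢ(A), ∪ᵢ fᵢ(B)) ≤ φ(d_HP(A,B)), and each fᵢ maps bounded sets to bounded sets. -/

import Mathlib

open Filter Topology Set

noncomputable section

/-- A semi-metric: symmetric, vanishing exactly on the diagonal (no triangle inequality). -/
def IsSemiMetric {X : Type*} (d : X → X → NNReal) : Prop :=
  (∀ x y, d x y = d y x) ∧ ∀ x y, d x y = 0 ↔ x = y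

/-- Ball of radius `r` around `x`. -/
def SMBall {X : Type*} (d : X → X → NNReal) (x : X) (r : NNReal) : Set X := {y | d x y < r}

/-- The basic triangle function `Φ_d(u,v) = sup{d(x,y) : ∃ z, d(x,z) ≤ u, d(y,z) ≤ v}`. -/
def SMPhi {X : Type*} (d : X → X → NNReal) (u v : NNReal) : ENNReal :=
  ⨆ (p : X × X) (_ : ∃ z : X, d p.1 z ≤ u ∧ d p.2 z ≤ v), (d p.1 p.2 : ENNReal)

/-- Normal property: the basic triangle function is finite-valued. -/
def SMNormal {X : Type*} (d : X → X → NNReal) : Prop := ∀ u v : NNReal, SMPhi d u v < ⊤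

/-- Regular property: the basic triangle function is continuous at `(0,0)`. -/
def SMRegular {X : Type*} (d : X → X → NNReal) : Prop :=
  ∀ ε : NNReal, 0 < ε → ∃ δ : NNReal, 0 < δ ∧
    ∀ u v : NNReal, u ≤ δ → v ≤ δ → SMPhi d u v < (ε : ENNReal)

/-- Cauchy sequence with respect to a semi- or pre-metric. -/
def SMCauchy {X : Type*} (d : X → X → NNReal) (x : ℕ → X) : Prop :=
  ∀ ε : NNReal, 0 < ε → ∃ N : ℕ, ∀ m ≥ N, ∀ n ≥ N, d (x m) (x n) < ε

/-- Completeness: every Cauchy sequence converges. -/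
def SMComplete {X : Type*} (d : X → X → NNReal) : Prop :=
  ∀ x : ℕ → X, SMCauchy d x → ∃ l : X, Tendsto (fun n => d (x n) l) atTop (𝓝 0)

/-- Boundedness: contained in some ball. -/
def SMBounded {X : Type*} (d : X → X → NNReal) (H : Set X) : Prop :=
  ∃ (x₀ : X) (r : NNReal), H ⊆ SMBall d x₀ r

/-- Comparison function: increasing, with iterates tending to zero on `(0,∞)`. -/
def SMComparison (φ : NNReal → NNReal) : Prop :=
  Monotone φ ∧ ∀ t : NNReal, 0 < t → Tendsto (fun n => φ^[n] t) atTop (𝓝 0)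

/-- Right-continuity of a function `[0,∞) → [0,∞)`. -/
def SMRightCont (φ : NNReal → NNReal) : Prop :=
  ∀ t : NNReal, ContinuousWithinAt φ (Ici t) t

/-- Diameter of a set. -/
def SMdiam {X : Type*} (d : X → X → NNReal) (H : Set X) : ENNReal :=
  ⨆ (x ∈ H) (y ∈ H), (d x y : ENNReal)

/-- `r`-neighborhood of a set. -/
def SMnbhd {X : Type*} (d : X → X → NNReal) (A : Set X) (r : NNReal) : Set X :=
  ⋃ x ∈ A, SMBall d x r

/-- Kuratowski measure of non-compactness. -/
def SMchi {X : Type*} (d : X → X → NNReal) (H : Set X) : ENNReal :=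
  sInf {c : ENNReal | ∃ r : NNReal, c = (r : ENNReal) ∧ 0 < r ∧
    ∃ s : Finset X, H ⊆ ⋃ x ∈ s, SMBall d x r}

/-- Hausdorff-Pompeiu distance between subsets. -/
def SMdHP {X : Type*} (d : X → X → NNReal) (A B : Set X) : ENNReal :=
  sInf {c : ENNReal | ∃ r : NNReal, c = (r : ENNReal) ∧ 0 < r ∧
    A ⊆ SMnbhd d B r ∧ B ⊆ SMnbhd d A r}

/-- Open sets of the semi-metric topology. -/
def SMOpen {X : Type*} (d : X → X → NNReal) (U : Set X) : Prop :=
  ∀ x ∈ U, ∃ r : NNReal, 0 < r ∧ SMBall d x r ⊆ U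

/-- Closed sets of the semi-metric topology. -/
def SMClosed {X : Type*} (d : X → X → NNReal) (A : Set X) : Prop := SMOpen d Aᶜ

/-- Max semi-metric on `X^q`. -/
def SMmax {X : Type*} (q : ℕ) (d : X → X → NNReal) (x y : Fin q → X) : NNReal :=
  Finset.univ.sup fun i => d (x i) (y i)

lemma SMPhi_ge {X : Type*} (d : X → X → NNReal) {u v : NNReal} {x y z : X}
    (h1 : d x z ≤ u) (h2 : d y z ≤ v) : (d x y : ENNReal) ≤ SMPhi d u v :=
  le_iSup₂_of_le (x, y) ⟨z, h1, h2⟩ le_rfl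

lemma SMdHP_finite {X : Type*} (d : X → X → NNReal) (hd : IsSemiMetric d)
    (hnorm : SMNormal d) (A B : Set X) (hA : A.Nonempty) (hAb : SMBounded d A)
    (hB : B.Nonempty) (hBb : SMBounded d B) : SMdHP d A B < ⊤ := by
  obtain ⟨a₀, ha₀⟩ := hA
  obtain ⟨b₀, hb₀⟩ := hB
  obtain ⟨x₀, r₁, hA'⟩ := hAb
  obtain ⟨x₁, r₂, hB'⟩ := hBb
  set CA : NNReal := (SMPhi d (d b₀ x₀) r₁).toNNReal
  set CB : NNReal := (SMPhi d (d a₀ x₁) r₂).toNNReal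
  set R : NNReal := CA ⊔ CB + 1 with hR
  have hAn : ∀ a ∈ A, d b₀ a ≤ CA := by
    intro a ha
    have h1 : (d b₀ a : ENNReal) ≤ SMPhi d (d b₀ x₀) r₁ :=
      SMPhi_ge d le_rfl (le_of_lt (by rw [hd.1 a x₀]; exact hA' ha))
    exact_mod_cast h1.trans_eq (ENNReal.coe_toNNReal (hnorm _ _).ne).symm
  have hBn : ∀ b ∈ B, d a₀ b ≤ CB := by
    intro b hb
    have h1 : (d a₀ b : ENNReal) ≤ SMPhi d (d a₀ x₁) r₂ :=
      SMPhi_ge d le_rfl (le_of_lt (by rw [hd.1 b x₁]; exact hB' hb))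
    exact_mod_cast h1.trans_eq (ENNReal.coe_toNNReal (hnorm _ _).ne).symm
  have hmem : (R : ENNReal) ∈ {c : ENNReal | ∃ r : NNReal, c = (r : ENNReal) ∧ 0 < r ∧
      A ⊆ SMnbhd d B r ∧ B ⊆ SMnbhd d A r} := by
    refine ⟨R, rfl, ?_, ?_, ?_⟩
    · positivity
    · intro a ha
      refine Set.mem_iUnion₂.mpr ⟨b₀, hb₀, ?_⟩
      exact lt_of_le_of_lt ((hAn a ha).trans le_sup_left) (lt_add_of_pos_right _ one_pos)
    · intro b hb
      refine Set.mem_iUnion₂.mpr ⟨a₀, ha₀, ?_⟩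
      exact lt_of_le_of_lt ((hBn b hb).trans le_sup_right) (lt_add_of_pos_right _ one_pos)
  exact lt_of_le_of_lt (sInf_le hmem) ENNReal.coe_lt_top

theorem stmt12 {X : Type*} (d : X → X → NNReal) (hd : IsSemiMetric d)
    (hnorm : SMNormal d) (hreg : SMRegular d)
    {n : ℕ} (hn : 0 < n)
    (φ : Fin n → NNReal → NNReal)
    (hφ : ∀ i, SMComparison (φ i) ∧ SMRightCont (φ i))
    (f : Fin n → X → X) (hf : ∀ i x y, d (f i x) (f i y) ≤ φ i (d x y))
    (A B : Set X) (hA : A.Nonempty) (hAb : SMBounded d A)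
    (hB : B.Nonempty) (hBb : SMBounded d B) :
    (∀ i, SMBounded d (f i '' A)) ∧
    SMdHP d (⋃ i, f i '' A) (⋃ i, f i '' B) ≤
      ((Finset.univ.sup fun i => φ i ((SMdHP d A B).toNNReal) : NNReal) : ENNReal) := by
  constructor
  · -- each f i '' A is bounded
    intro i
    obtain ⟨a₀, ha₀⟩ := hA
    obtain ⟨x₀, r₁, hA'⟩ := hAb
    set C : NNReal := (SMPhi d r₁ r₁).toNNReal
    have hC : ∀ a ∈ A, d a₀ a ≤ C := by
      intro a ha
      have h1 : (d a₀ a : ENNReal) ≤ SMPhi d r₁ r₁ :=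
        SMPhi_ge d (le_of_lt (by rw [hd.1 a₀ x₀]; exact hA' ha₀))
          (le_of_lt (by rw [hd.1 a x₀]; exact hA' ha))
      exact_mod_cast h1.trans_eq (ENNReal.coe_toNNReal (hnorm _ _).ne).symm
    refine ⟨f i a₀, φ i C + 1, ?_⟩
    rintro y ⟨a, ha, rfl⟩
    exact lt_of_le_of_lt ((hf i a₀ a).trans ((hφ i).1.1 (hC a ha)))
      (lt_add_of_pos_right _ one_pos)
  · -- the Hausdorff-Pompeiu estimate
    set t : NNReal := (SMdHP d A B).toNNReal with htdef
    set M : NNReal := Finset.univ.sup fun i => φ i t with hM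
    have hfin : SMdHP d A B < ⊤ := SMdHP_finite d hd hnorm A B hA hAb hB hBb
    have ht : (t : ENNReal) = SMdHP d A B := ENNReal.coe_toNNReal hfin.ne
    apply ENNReal.le_of_forall_pos_le_add
    intro ε hε _
    -- right continuity: find u > t such that φ i s < M + ε for all s ∈ [t, u)
    have hev : ∀ᶠ s in nhdsWithin t (Set.Ici t), ∀ i, φ i s < M + ε := by
      rw [Filter.eventually_all]
      intro i
      have h1 : ∀ᶠ y in nhds (φ i t), y < M + ε :=
        Filter.Tendsto.eventually_lt_const (lt_of_le_of_lt (Finset.le_sup (Finset.mem_univ i))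
          (lt_add_of_pos_right _ hε)) Filter.tendsto_id
      exact ((hφ i).2 t).eventually h1
    obtain ⟨u, hu, hsub⟩ :=
      (nhdsGE_basis_of_exists_gt ⟨t + 1, lt_add_of_pos_right t one_pos⟩).mem_iff.mp hev
    -- pick a radius r' ∈ [t, u) witnessing the HP distance of A, B
    have hlt : SMdHP d A B < (u : ENNReal) := by
      rw [← ht]; exact_mod_cast hu
    obtain ⟨c, hc, hclt⟩ := sInf_lt_iff.mp hlt
    obtain ⟨r', rfl, hr'pos, hAB, hBA⟩ := hc
    have hr'ge : t ≤ r' := by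
      have : (t : ENNReal) ≤ (r' : ENNReal) := ht.trans_le (sInf_le ⟨r', rfl, hr'pos, hAB, hBA⟩)
      exact_mod_cast this
    have hr'lt : r' < u := by exact_mod_cast hclt
    have hkey : ∀ i, φ i r' < M + ε := hsub ⟨hr'ge, hr'lt⟩
    -- show M + ε is an admissible radius for the unions
    have hmem : ((M + ε : NNReal) : ENNReal) ∈ {c : ENNReal | ∃ r : NNReal,
        c = (r : ENNReal) ∧ 0 < r ∧
        (⋃ i, f i '' A) ⊆ SMnbhd d (⋃ i, f i '' B) r ∧
        (⋃ i, f i '' B) ⊆ SMnbhd d (⋃ i, f i '' A) r} := by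
      refine ⟨M + ε, rfl, by positivity, ?_, ?_⟩
      · rintro x hx
        obtain ⟨i, a, ha, rfl⟩ := by simpa using hx
        obtain ⟨b, hb, hdba⟩ := Set.mem_iUnion₂.mp (hAB ha)
        refine Set.mem_iUnion₂.mpr ⟨f i b, Set.mem_iUnion.mpr ⟨i, Set.mem_image_of_mem _ hb⟩, ?_⟩
        exact lt_of_le_of_lt ((hf i b a).trans ((hφ i).1.1 hdba.le)) (hkey i)
      · rintro x hx
        obtain ⟨i, b, hb, rfl⟩ := by simpa using hx
        obtain ⟨a, ha, hdab⟩ := Set.mem_iUnion₂.mp (hBA hb)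
        refine Set.mem_iUnion₂.mpr ⟨f i a, Set.mem_iUnion.mpr ⟨i, Set.mem_image_of_mem _ ha⟩, ?_⟩
        exact lt_of_le_of_lt ((hf i a b).trans ((hφ i).1.1 hdab.le)) (hkey i)
    calc SMdHP d (⋃ i, f i '' A) (⋃ i, f i '' B) ≤ ((M + ε : NNReal) : ENNReal) :=
          sInf_le hmem
      _ = (M : ENNReal) + ε := by push_cast; ring
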